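/- Define m_n := (n!)^2 K_n^2 for n ≥ 1, where K_n := ∫_0^∞ (ln(1+x))^n e^{-x} dx. Then the sequence (m_n) satisfies Carleman's condition ∑_{n=1}^∞ m_n^{-1/(2n)} = ∞, but there is no constant c₀ > 0 such that m_n ≤ (2n)! · c₀^n for all n ≥ 1. (By the known characterization of Hardy's condition, the latter means that the random variable X with moments m_n fails Hardy's condition: E e^{ε√X} = ∞ for every ε > 0.) -/

import Mathlib

open MeasureTheory Filter Topology Real
open Set

lemma not_summable_one_div_nat_mul_log :
    ¬ Summable (fun n : ℕ => 1 / ((n : ℝ) * Real.log n)) := by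
  intro hs
  set f : ℕ → ℝ := fun n => 1 / (((n : ℝ) + 1) * Real.log ((n : ℝ) + 1)) with hf
  have hfs : Summable f := by
    have := (summable_nat_add_iff 1).2 hs
    simpa [f] using this
  have hnonneg : ∀ n, 0 ≤ f n := by
    intro n
    have h1 : (0:ℝ) ≤ (n:ℝ) + 1 := by positivity
    have h2 : (0:ℝ) ≤ Real.log ((n:ℝ)+1) := Real.log_nonneg (by linarith)
    positivity
  have hanti : ∀ ⦃m n : ℕ⦄, 0 < m → m ≤ n → f n ≤ f m := by
    intro m n hm hmn
    have hm1 : (1:ℝ) < (m:ℝ) + 1 := by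
      have : (1:ℝ) ≤ (m:ℝ) := by exact_mod_cast hm
      linarith
    have hmn' : (m:ℝ) + 1 ≤ (n:ℝ) + 1 := by
      have : (m:ℝ) ≤ (n:ℝ) := by exact_mod_cast hmn
      linarith
    have hlogm : 0 < Real.log ((m:ℝ)+1) := Real.log_pos hm1
    have hlogmn : Real.log ((m:ℝ)+1) ≤ Real.log ((n:ℝ)+1) :=
      Real.log_le_log (by linarith) hmn'
    apply one_div_le_one_div_of_le
    · positivity
    · apply mul_le_mul hmn' hlogmn hlogm.le (by positivity)
  have hcond : Summable (fun k : ℕ => (2:ℝ) ^ k * f (2 ^ k)) :=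
    (summable_condensed_iff_of_nonneg hnonneg hanti).2 hfs
  -- lower bound: 2^k * f (2^k) ≥ (1/(2 log 2)) * (1/(k+1))
  have hcomp : ∀ k : ℕ, (1 / (2 * Real.log 2)) * (1 / ((k:ℝ) + 1)) ≤ (2:ℝ) ^ k * f (2 ^ k) := by
    intro k
    have h2k : (0:ℝ) < 2 ^ k := by positivity
    have hcast : ((2 ^ k : ℕ) : ℝ) = (2:ℝ) ^ k := by push_cast; ring
    have hlog2 : (0:ℝ) < Real.log 2 := Real.log_pos (by norm_num)
    have hle : (2:ℝ) ^ k + 1 ≤ 2 ^ (k+1) := by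
      have : (1:ℝ) ≤ 2 ^ k := one_le_pow₀ (by norm_num)
      rw [pow_succ]; linarith
    have hlogle : Real.log ((2:ℝ)^k + 1) ≤ ((k:ℝ)+1) * Real.log 2 := by
      calc Real.log ((2:ℝ)^k + 1) ≤ Real.log (2 ^ (k+1)) := Real.log_le_log (by positivity) hle
        _ = ((k:ℝ)+1) * Real.log 2 := by rw [Real.log_pow]; push_cast; ring
    have hlogpos : 0 < Real.log ((2:ℝ)^k + 1) := Real.log_pos (by linarith)
    have hfval : f (2^k) = 1 / (((2:ℝ)^k + 1) * Real.log ((2:ℝ)^k + 1)) := by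
      simp only [f, hcast]
    rw [hfval]
    have hrw1 : (1 / (2 * Real.log 2)) * (1 / ((k:ℝ) + 1)) = 1 / (2 * Real.log 2 * ((k:ℝ)+1)) := by
      rw [one_div_mul_one_div]
    have hrw2 : (2:ℝ)^k * (1 / (((2:ℝ)^k + 1) * Real.log ((2:ℝ)^k + 1)))
        = (2:ℝ)^k / (((2:ℝ)^k + 1) * Real.log ((2:ℝ)^k + 1)) := by
      rw [mul_one_div]
    rw [hrw1, hrw2, div_le_div_iff₀ (by positivity) (by positivity)]
    have hd : ((2:ℝ)^k + 1) ≤ 2 * 2 ^ k := by linarith [one_le_pow₀ (show (1:ℝ) ≤ 2 by norm_num) (n := k)]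
    calc (1:ℝ) * (((2:ℝ)^k + 1) * Real.log ((2:ℝ)^k+1))
        = ((2:ℝ)^k + 1) * Real.log ((2:ℝ)^k+1) := by ring
      _ ≤ (2 * 2^k) * (((k:ℝ)+1) * Real.log 2) :=
          mul_le_mul hd hlogle hlogpos.le (by positivity)
      _ = 2 ^ k * (2 * Real.log 2 * ((k:ℝ)+1)) := by ring
  have hsum2 : Summable (fun k : ℕ => (1 / (2 * Real.log 2)) * (1 / ((k:ℝ) + 1))) := by
    apply Summable.of_nonneg_of_le _ hcomp hcond
    intro k
    have hlog2 : (0:ℝ) < Real.log 2 := Real.log_pos (by norm_num)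
    positivity
  have hlog2 : (0:ℝ) < Real.log 2 := Real.log_pos (by norm_num)
  have : Summable (fun k : ℕ => 1 / ((k:ℝ) + 1)) := by
    have := hsum2.mul_left (2 * Real.log 2)
    convert this using 2 with k
    · rfl
    field_simp
  have : Summable (fun k : ℕ => 1 / ((k:ℝ))) := by
    rw [← summable_nat_add_iff 1]
    simpa using this
  exact Real.not_summable_one_div_natCast this

lemma contOn_f (n : ℕ) : ContinuousOn (fun x : ℝ => (Real.log (1 + x)) ^ n * Real.exp (-x)) (Ioi 0) := by
  apply ContinuousOn.mul
  · apply ContinuousOn.pow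
    apply ContinuousOn.log
    · exact (continuous_const.add continuous_id).continuousOn
    · intro x hx
      have : (0:ℝ) < x := hx
      positivity
  · exact (Real.continuous_exp.comp continuous_neg).continuousOn

lemma f_nonneg {n : ℕ} {x : ℝ} (hx : x ∈ Ioi (0:ℝ)) :
    0 ≤ (Real.log (1 + x)) ^ n * Real.exp (-x) := by
  have hx' : (0:ℝ) < x := hx
  have h1 : 0 ≤ Real.log (1 + x) := Real.log_nonneg (by linarith)
  positivity

lemma integrable_f (n : ℕ) :
    IntegrableOn (fun x : ℝ => (Real.log (1 + x)) ^ n * Real.exp (-x)) (Ioi 0) := by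
  have hg : IntegrableOn (fun x : ℝ => Real.exp (-x) * x ^ (((n:ℝ)+1) - 1)) (Ioi 0) :=
    Real.GammaIntegral_convergent (by positivity)
  apply Integrable.mono hg ((contOn_f n).aestronglyMeasurable measurableSet_Ioi)
  rw [ae_restrict_iff' measurableSet_Ioi]
  apply ae_of_all
  intro x hx
  have hx' : (0:ℝ) < x := hx
  have h1 : 0 ≤ Real.log (1 + x) := Real.log_nonneg (by linarith)
  have h2 : Real.log (1 + x) ≤ x := by
    have := Real.log_le_sub_one_of_pos (show (0:ℝ) < 1 + x by linarith)
    linarith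
  have h3 : x ^ (((n:ℝ)+1) - 1) = x ^ n := by
    rw [add_sub_cancel_right, Real.rpow_natCast]
  rw [Real.norm_eq_abs, Real.norm_eq_abs, abs_of_nonneg (f_nonneg hx), h3,
    abs_of_nonneg (by positivity)]
  rw [mul_comm (Real.exp (-x))]
  exact mul_le_mul_of_nonneg_right (pow_le_pow_left₀ h1 h2 n) (Real.exp_pos _).le

lemma half_exp_integral : (∫ x : ℝ in Ioi 0, Real.exp (-((1:ℝ)/2) * x)) = 2 := by
  have h : ∀ x ∈ Ioi (0:ℝ), HasDerivAt (fun x : ℝ => -2 * Real.exp (-((1:ℝ)/2) * x))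
      (Real.exp (-((1:ℝ)/2) * x)) x := by
    intro x _
    have : HasDerivAt (fun x : ℝ => -((1:ℝ)/2) * x) (-((1:ℝ)/2)) x := by
      simpa using (hasDerivAt_id x).const_mul (-((1:ℝ)/2))
    have h2 := (this.exp).const_mul (-2 : ℝ)
    convert h2 using 1
    · rfl
    · rfl
    ring
  have hint : IntegrableOn (fun x : ℝ => Real.exp (-((1:ℝ)/2) * x)) (Ioi 0) :=
    exp_neg_integrableOn_Ioi 0 (by norm_num : (0:ℝ) < 1/2)
  have hcont : ContinuousWithinAt (fun x : ℝ => -2 * Real.exp (-((1:ℝ)/2) * x)) (Ici 0) 0 :=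
    (Continuous.continuousWithinAt (by continuity))
  have htend : Tendsto (fun x : ℝ => -2 * Real.exp (-((1:ℝ)/2) * x)) atTop (𝓝 0) := by
    have : Tendsto (fun x : ℝ => -((1:ℝ)/2) * x) atTop atBot :=
      Tendsto.const_mul_atTop_of_neg (by norm_num) tendsto_id
    have := Real.tendsto_exp_atBot.comp this
    simpa using this.const_mul (-2 : ℝ)
  have := integral_Ioi_of_hasDerivAt_of_tendsto hcont h hint htend
  rw [this]; norm_num

lemma log_ge_two {n : ℕ} (hn : 8 ≤ n) : (2:ℝ) ≤ Real.log n := by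
  have h8 : (8:ℝ) ≤ (n:ℝ) := by exact_mod_cast hn
  have : Real.log 8 ≤ Real.log n := Real.log_le_log (by norm_num) h8
  have h2 : Real.log 8 = 3 * Real.log 2 := by
    rw [show (8:ℝ) = 2 ^ 3 by norm_num, Real.log_pow]; push_cast; ring
  nlinarith [Real.log_two_gt_d9]

lemma K_upper {n : ℕ} (hn : 8 ≤ n) :
    (∫ x in Ioi (0:ℝ), (Real.log (1 + x)) ^ n * Real.exp (-x)) ≤ 2 * (Real.log n) ^ n := by
  set L := Real.log n with hLdef
  have hL : (2:ℝ) ≤ L := log_ge_two hn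
  have hLpos : (0:ℝ) < L := by linarith
  have hnR : (8:ℝ) ≤ (n:ℝ) := by exact_mod_cast hn
  have hnpos : (0:ℝ) < (n:ℝ) := by linarith
  have key : ∀ x ∈ Ioi (0:ℝ),
      (Real.log (1 + x)) ^ n * Real.exp (-x) ≤ L ^ n * Real.exp (-((1:ℝ)/2) * x) := by
    intro x hx
    have hx' : (0:ℝ) < x := hx
    have ha : Real.log (1 + x) ≤ L + x / n := by
      have h1 : Real.log (1 + x) ≤ Real.log ((n:ℝ) + x) :=
        Real.log_le_log (by linarith) (by linarith)
      have h2 : Real.log ((n:ℝ) + x) = L + Real.log (1 + x / n) := by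
        rw [show (n:ℝ) + x = (n:ℝ) * (1 + x / n) by field_simp,
          Real.log_mul (by positivity) (by positivity)]
      have h3 : Real.log (1 + x / n) ≤ x / n := by
        have := Real.log_le_sub_one_of_pos (show (0:ℝ) < 1 + x / n by positivity)
        linarith
      linarith
    have hb : L + x / n ≤ L * Real.exp (x / ((n:ℝ) * L)) := by
      have h4 : x / ((n:ℝ) * L) + 1 ≤ Real.exp (x / ((n:ℝ) * L)) := Real.add_one_le_exp _
      have h5 : L * (x / ((n:ℝ) * L) + 1) ≤ L * Real.exp (x / ((n:ℝ) * L)) :=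
        mul_le_mul_of_nonneg_left h4 hLpos.le
      have h6 : L * (x / ((n:ℝ) * L) + 1) = L + x / n := by field_simp; ring
      linarith
    have hc : (Real.log (1 + x)) ^ n ≤ L ^ n * Real.exp (x / L) := by
      have hnn : 0 ≤ Real.log (1 + x) := Real.log_nonneg (by linarith)
      calc (Real.log (1 + x)) ^ n ≤ (L * Real.exp (x / ((n:ℝ) * L))) ^ n :=
            pow_le_pow_left₀ hnn (ha.trans hb) n
        _ = L ^ n * Real.exp (x / ((n:ℝ) * L)) ^ n := by rw [mul_pow]
        _ = L ^ n * Real.exp ((n:ℝ) * (x / ((n:ℝ) * L))) := by rw [Real.exp_nat_mul]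
        _ = L ^ n * Real.exp (x / L) := by
            congr 2
            field_simp
    have hd : Real.exp (x / L) ≤ Real.exp (x / 2) :=
      Real.exp_le_exp.2 (div_le_div_of_nonneg_left hx'.le (by norm_num) hL)
    calc (Real.log (1 + x)) ^ n * Real.exp (-x)
        ≤ (L ^ n * Real.exp (x / 2)) * Real.exp (-x) := by
          apply mul_le_mul_of_nonneg_right _ (Real.exp_pos _).le
          exact hc.trans (mul_le_mul_of_nonneg_left hd (by positivity))
      _ = L ^ n * Real.exp (-((1:ℝ)/2) * x) := by
          rw [mul_assoc, ← Real.exp_add]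
          congr 2
          ring
  have hgint : IntegrableOn (fun x : ℝ => L ^ n * Real.exp (-((1:ℝ)/2) * x)) (Ioi 0) :=
    (exp_neg_integrableOn_Ioi 0 (by norm_num : (0:ℝ) < 1/2)).const_mul _
  calc (∫ x in Ioi (0:ℝ), (Real.log (1 + x)) ^ n * Real.exp (-x))
      ≤ ∫ x in Ioi (0:ℝ), L ^ n * Real.exp (-((1:ℝ)/2) * x) :=
        setIntegral_mono_on (integrable_f n) hgint measurableSet_Ioi key
    _ = L ^ n * ∫ x in Ioi (0:ℝ), Real.exp (-((1:ℝ)/2) * x) := integral_const_mul _ _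
    _ = 2 * L ^ n := by rw [half_exp_integral]; ring

lemma K_lower {n : ℕ} (hn : 1 ≤ n) :
    (Real.log (1 + (n:ℝ))) ^ n * Real.exp (-(n:ℝ)) ≤
      ∫ x in Ioi (0:ℝ), (Real.log (1 + x)) ^ n * Real.exp (-x) := by
  have hnR : (1:ℝ) ≤ (n:ℝ) := by exact_mod_cast hn
  have hexp : IntegrableOn (fun x : ℝ => Real.exp (-x)) (Ioi (n:ℝ)) := by
    have := exp_neg_integrableOn_Ioi (n:ℝ) (show (0:ℝ) < 1 by norm_num)
    simpa using this
  have h1 : (∫ x in Ioi ((n:ℝ)), (Real.log (1 + (n:ℝ))) ^ n * Real.exp (-x))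
      = (Real.log (1 + (n:ℝ))) ^ n * Real.exp (-(n:ℝ)) := by
    rw [integral_const_mul, integral_exp_neg_Ioi]
  have h2 : (∫ x in Ioi ((n:ℝ)), (Real.log (1 + (n:ℝ))) ^ n * Real.exp (-x))
      ≤ ∫ x in Ioi ((n:ℝ)), (Real.log (1 + x)) ^ n * Real.exp (-x) := by
    apply setIntegral_mono_on (hexp.const_mul _)
      ((integrable_f n).mono_set (Ioi_subset_Ioi (by linarith))) measurableSet_Ioi
    intro x hx
    have hx' : (n:ℝ) < x := hx
    apply mul_le_mul_of_nonneg_right _ (Real.exp_pos _).le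
    exact pow_le_pow_left₀ (Real.log_nonneg (by linarith))
      (Real.log_le_log (by linarith) (by linarith)) n
  have h3 : (∫ x in Ioi ((n:ℝ)), (Real.log (1 + x)) ^ n * Real.exp (-x))
      ≤ ∫ x in Ioi ((0:ℝ)), (Real.log (1 + x)) ^ n * Real.exp (-x) := by
    apply setIntegral_mono_set (integrable_f n)
    · filter_upwards [ae_restrict_mem measurableSet_Ioi] with x hx
      exact f_nonneg hx
    · exact HasSubset.Subset.eventuallyLE (Ioi_subset_Ioi (by linarith))
  linarith

lemma two_n_factorial_le (n : ℕ) :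
    ((2 * n).factorial : ℝ) ≤ 4 ^ n * ((n.factorial : ℝ))^2 := by
  have hc : (2 * n).choose n ≤ 4 ^ n := by
    have h1 : (2 * n).choose n ≤ ∑ m ∈ Finset.range (2 * n + 1), (2 * n).choose m :=
      Finset.single_le_sum (fun i _ => Nat.zero_le _) (Finset.mem_range.2 (by omega))
    rw [Nat.sum_range_choose] at h1
    calc (2 * n).choose n ≤ 2 ^ (2 * n) := h1
      _ = 4 ^ n := by rw [pow_mul]; norm_num
  have he : (2 * n).choose n * n.factorial * n.factorial = (2 * n).factorial := by
    have := Nat.choose_mul_factorial_mul_factorial (show n ≤ 2 * n by omega)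
    simpa [show 2 * n - n = n by omega] using this
  have : (2 * n).factorial ≤ 4 ^ n * (n.factorial * n.factorial) := by
    rw [← he]
    calc (2 * n).choose n * n.factorial * n.factorial
        ≤ 4 ^ n * n.factorial * n.factorial :=
          Nat.mul_le_mul_right _ (Nat.mul_le_mul_right _ hc)
      _ = 4 ^ n * (n.factorial * n.factorial) := by ring
  calc ((2 * n).factorial : ℝ) ≤ ((4 ^ n * (n.factorial * n.factorial) : ℕ) : ℝ) := by
        exact_mod_cast this
    _ = 4 ^ n * ((n.factorial : ℝ))^2 := by push_cast; ring

/-- The moments `mₙ = (n!)² Kₙ²` (with `Kₙ = ∫_0^∞ (ln(1+x))ⁿ e^{-x} dx`) satisfy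
Carleman's condition `∑ₙ mₙ^{-1/(2n)} = ∞`, but there is no constant `c₀ > 0` with
`mₙ ≤ (2n)! c₀ⁿ` for all `n ≥ 1` (failure of Hardy's condition). -/
theorem carleman_holds_hardy_fails
    (K : ℕ → ℝ)
    (hK : ∀ n : ℕ, K n = ∫ x in Set.Ioi (0 : ℝ), (Real.log (1 + x)) ^ n * Real.exp (-x))
    (m : ℕ → ℝ)
    (hm : ∀ n : ℕ, m n = (n.factorial : ℝ) ^ 2 * K n ^ 2) :
    Tendsto (fun N : ℕ => ∑ n ∈ Finset.Icc 1 N, m n ^ (-(1 : ℝ) / (2 * n)))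
      atTop atTop ∧
    ¬ ∃ c₀ : ℝ, 0 < c₀ ∧ ∀ n : ℕ, 1 ≤ n →
      m n ≤ ((2 * n).factorial : ℝ) * c₀ ^ n := by
  have hKlow : ∀ n : ℕ, 1 ≤ n →
      (Real.log (1 + (n:ℝ))) ^ n * Real.exp (-(n:ℝ)) ≤ K n := by
    intro n hn; rw [hK]; exact K_lower hn
  have hKnonneg : ∀ n : ℕ, 1 ≤ n → 0 < K n := by
    intro n hn
    have h1 : (1:ℝ) ≤ (n:ℝ) := by exact_mod_cast hn
    have h2 : 0 < Real.log (1 + (n:ℝ)) := Real.log_pos (by linarith)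
    have := hKlow n hn
    nlinarith [Real.exp_pos (-(n:ℝ)), pow_pos h2 n]
  constructor
  · -- Carleman
    set a : ℕ → ℝ := fun n => m n ^ (-(1 : ℝ) / (2 * (n:ℝ))) with ha
    have hanonneg : ∀ n, 0 ≤ a n := by
      intro n
      apply Real.rpow_nonneg
      rw [hm]; positivity
    have hmain : ∀ n : ℕ, 8 ≤ n → (2 * (n:ℝ) * Real.log n)⁻¹ ≤ a n := by
      intro n hn
      have hn1 : 1 ≤ n := by omega
      have hL : (2:ℝ) ≤ Real.log n := log_ge_two hn
      have hnR : (8:ℝ) ≤ (n:ℝ) := by exact_mod_cast hn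
      set B : ℝ := 2 * (n:ℝ) * Real.log n with hB
      have hBpos : 0 < B := by positivity
      have hmpos : 0 < m n := by
        rw [hm]
        have := hKnonneg n hn1
        have hf : (0:ℝ) < (n.factorial : ℝ) := by exact_mod_cast n.factorial_pos
        positivity
      have hmupper : m n ≤ B ^ (2 * n) := by
        have hKu : K n ≤ 2 * (Real.log n) ^ n := by rw [hK]; exact K_upper hn
        have hKpos := hKnonneg n hn1
        have hfle : (n.factorial : ℝ) ≤ (n:ℝ) ^ n := by exact_mod_cast n.factorial_le_pow
        have hfnn : (0:ℝ) ≤ (n.factorial : ℝ) := by positivity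
        have h1 : m n ≤ ((n:ℝ) ^ n) ^ 2 * (2 * (Real.log n) ^ n) ^ 2 := by
          rw [hm]
          apply mul_le_mul (pow_le_pow_left₀ hfnn hfle 2)
            (pow_le_pow_left₀ hKpos.le hKu 2) (by positivity) (by positivity)
        have h2 : B ^ (2 * n) = 2 ^ (2 * n) * (n:ℝ) ^ (2 * n) * (Real.log n) ^ (2 * n) := by
          rw [hB, mul_pow, mul_pow]
        have h3 : ((n:ℝ) ^ n) ^ 2 * (2 * (Real.log n) ^ n) ^ 2
            = 4 * ((n:ℝ) ^ (2 * n) * (Real.log n) ^ (2 * n)) := by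
          rw [mul_pow, ← pow_mul, ← pow_mul, Nat.mul_comm n 2,
            show (2:ℝ)^2 = 4 by norm_num]
          ring
        have h4 : (4:ℝ) ≤ 2 ^ (2 * n) := by
          calc (4:ℝ) = 2 ^ 2 := by norm_num
            _ ≤ 2 ^ (2 * n) := pow_le_pow_right₀ (by norm_num) (by omega)
        have h5 : 4 * ((n:ℝ) ^ (2 * n) * (Real.log n) ^ (2 * n))
            ≤ 2 ^ (2 * n) * ((n:ℝ) ^ (2 * n) * (Real.log n) ^ (2 * n)) :=
          mul_le_mul_of_nonneg_right h4 (by positivity)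
        calc m n ≤ 4 * ((n:ℝ) ^ (2 * n) * (Real.log n) ^ (2 * n)) := h3 ▸ h1
          _ ≤ 2 ^ (2 * n) * ((n:ℝ) ^ (2 * n) * (Real.log n) ^ (2 * n)) := h5
          _ = B ^ (2 * n) := by rw [h2]; ring
      -- now rpow
      have hc : (-(1 : ℝ) / (2 * (n:ℝ))) ≤ 0 := by
        apply div_nonpos_of_nonpos_of_nonneg <;> [norm_num; positivity]
      have h6 : (B ^ (2 * n) : ℝ) ^ (-(1 : ℝ) / (2 * (n:ℝ))) ≤ a n :=
        Real.rpow_le_rpow_of_nonpos hmpos hmupper hc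
      have h7 : (B ^ (2 * n) : ℝ) ^ (-(1 : ℝ) / (2 * (n:ℝ))) = B⁻¹ := by
        rw [← Real.rpow_natCast B (2 * n), ← Real.rpow_mul hBpos.le]
        have : ((2 * n : ℕ) : ℝ) * (-(1 : ℝ) / (2 * (n:ℝ))) = -1 := by
          push_cast
          field_simp
        rw [this, Real.rpow_neg_one]
      rw [← h7]; exact h6
    -- not summable a
    have hns : ¬ Summable a := by
      intro hs
      have h8 : Summable (fun i => a (i + 8)) := (summable_nat_add_iff 8).2 hs
      have hg : Summable (fun i : ℕ => (2 * ((i + 8 : ℕ):ℝ) * Real.log ((i + 8 : ℕ):ℝ))⁻¹) := by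
        apply Summable.of_nonneg_of_le _ (fun i => hmain (i + 8) (by omega)) h8
        intro i
        have : (0:ℝ) ≤ Real.log ((i + 8 : ℕ):ℝ) := Real.log_nonneg (by push_cast; linarith)
        positivity
      have hg2 : Summable (fun n : ℕ => (2 * (n:ℝ) * Real.log n)⁻¹) :=
        (summable_nat_add_iff 8).1 hg
      have hg3 : Summable (fun n : ℕ => 1 / ((n : ℝ) * Real.log n)) := by
        have := hg2.mul_left 2
        apply this.congr
        intro n
        rcases eq_or_ne (n:ℝ) 0 with h | h
        · simp [h]
        · have hln := Real.log_nonneg (show (1:ℝ) ≤ (n:ℝ) by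
            have : 1 ≤ n := Nat.one_le_iff_ne_zero.2 (by exact_mod_cast h)
            exact_mod_cast this)
          rcases eq_or_ne (Real.log n) 0 with h2 | h2
          · simp [h2]
          · field_simp
      exact not_summable_one_div_nat_mul_log hg3
    have hns' : ¬ Summable (fun i => a (1 + i)) := by
      intro hs
      apply hns
      have : (fun i => a (1 + i)) = (fun i => a (i + 1)) := by
        funext i; rw [add_comm]
      rw [this] at hs
      exact (summable_nat_add_iff 1).1 hs
    have hT : Tendsto (fun N => ∑ i ∈ Finset.range N, a (1 + i)) atTop atTop :=
      (not_summable_iff_tendsto_nat_atTop_of_nonneg (fun i => hanonneg _)).1 hns'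
    have heq : ∀ N, ∑ n ∈ Finset.Icc 1 N, a n = ∑ i ∈ Finset.range N, a (1 + i) := by
      intro N
      rw [← Finset.Ico_add_one_right_eq_Icc, Finset.sum_Ico_eq_sum_range]
      simp
    simpa only [heq] using hT
  · -- Hardy fails
    rintro ⟨c₀, hc₀, hbound⟩
    set b : ℝ := 4 * c₀ * Real.exp 2 with hb
    have hbpos : 0 < b := by positivity
    obtain ⟨n, hn⟩ := exists_nat_ge (Real.exp (Real.sqrt b + 1))
    have hexp1 : (1:ℝ) ≤ Real.exp (Real.sqrt b + 1) := Real.one_le_exp (by positivity)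
    have hn1 : 1 ≤ n := by exact_mod_cast hexp1.trans hn
    have hnR : (1:ℝ) ≤ (n:ℝ) := by exact_mod_cast hn1
    set L : ℝ := Real.log (1 + (n:ℝ)) with hL
    have hLb : Real.sqrt b + 1 ≤ L := by
      rw [hL, Real.le_log_iff_exp_le (by linarith)]
      linarith
    have hLpos : 0 < L := lt_of_lt_of_le (by positivity) hLb
    -- derive L^2 * exp(-2) ≤ 4 * c₀
    have hfpos : (0:ℝ) < (n.factorial : ℝ) := by exact_mod_cast n.factorial_pos
    have hKl := hKlow n hn1
    have hchain : (n.factorial : ℝ)^2 * (L ^ n * Real.exp (-(n:ℝ)))^2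
        ≤ (n.factorial : ℝ)^2 * (4 ^ n * c₀ ^ n) := by
      have h1 : (n.factorial : ℝ)^2 * (L ^ n * Real.exp (-(n:ℝ)))^2 ≤ m n := by
        rw [hm]
        apply mul_le_mul_of_nonneg_left _ (by positivity)
        apply pow_le_pow_left₀ (by positivity) hKl
      have h2 : m n ≤ ((2 * n).factorial : ℝ) * c₀ ^ n := hbound n hn1
      have h3 : ((2 * n).factorial : ℝ) * c₀ ^ n ≤ (4 ^ n * ((n.factorial : ℝ))^2) * c₀ ^ n :=
        mul_le_mul_of_nonneg_right (two_n_factorial_le n) (by positivity)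
      calc (n.factorial : ℝ)^2 * (L ^ n * Real.exp (-(n:ℝ)))^2 ≤ m n := h1
        _ ≤ ((2 * n).factorial : ℝ) * c₀ ^ n := h2
        _ ≤ (4 ^ n * ((n.factorial : ℝ))^2) * c₀ ^ n := h3
        _ = (n.factorial : ℝ)^2 * (4 ^ n * c₀ ^ n) := by ring
    have hcancel : (L ^ n * Real.exp (-(n:ℝ)))^2 ≤ 4 ^ n * c₀ ^ n :=
      le_of_mul_le_mul_left hchain (by positivity)
    have hrw : (L ^ n * Real.exp (-(n:ℝ)))^2 = ((L * Real.exp (-1))^2) ^ n := by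
      have : Real.exp (-(n:ℝ)) = Real.exp (-1) ^ n := by
        rw [← Real.exp_nat_mul]; congr 1; ring
      rw [this, ← mul_pow, ← pow_mul, ← pow_mul, Nat.mul_comm]
    rw [hrw] at hcancel
    have h4c : (4 ^ n * c₀ ^ n : ℝ) = (4 * c₀) ^ n := by rw [mul_pow]
    rw [h4c] at hcancel
    have hle : (L * Real.exp (-1))^2 ≤ 4 * c₀ :=
      le_of_pow_le_pow_left₀ (by omega) (by positivity) hcancel
    have hexp2 : Real.exp (-1) ^ 2 * Real.exp 2 = 1 := by
      rw [← Real.exp_nat_mul]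
      rw [← Real.exp_add]
      norm_num
    have hLsq : L ^ 2 ≤ b := by
      have h5 : (L * Real.exp (-1))^2 * Real.exp 2 ≤ 4 * c₀ * Real.exp 2 :=
        mul_le_mul_of_nonneg_right hle (Real.exp_pos 2).le
      have h6 : (L * Real.exp (-1))^2 * Real.exp 2 = L ^ 2 := by
        rw [mul_pow, mul_assoc, hexp2, mul_one]
      rw [← hb] at h5
      linarith [h6 ▸ h5]
    -- but L ≥ √b + 1 so L² > b
    have hsq : Real.sqrt b ^ 2 = b := Real.sq_sqrt hbpos.le
    have hsqnn : 0 ≤ Real.sqrt b := Real.sqrt_nonneg b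
    nlinarith [hLb, hsq, hsqnn, hLsq]
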